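/- There exists a constant C > 0 such that for every λ ≥ 2 and every bounded measurable a : [-1,1]² → ℝ, ∫_{{(x,y) ∈ [-1,1]² : λ|x²−y²| ≥ 1}} |a(x,y)| / (1 + λ|x² − y²|) dx dy ≤ C ‖a‖_∞ (log λ)² / λ. -/

import Mathlib

open MeasureTheory Real Set
open scoped ENNReal

namespace Stmt15

def B (s : ℝ) : Set (ℝ × ℝ) :=
  {p : ℝ × ℝ | p ∈ Icc ((-1:ℝ), (-1:ℝ)) ((1:ℝ), (1:ℝ)) ∧ |p.1 ^ 2 - p.2 ^ 2| ≤ s}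

lemma mem_sq_iff (p : ℝ × ℝ) :
    p ∈ Icc ((-1:ℝ), (-1:ℝ)) ((1:ℝ), (1:ℝ)) ↔ p.1 ∈ Icc (-1:ℝ) 1 ∧ p.2 ∈ Icc (-1:ℝ) 1 := by
  simp only [Set.mem_Icc, Prod.le_def]
  tauto

lemma measB (s : ℝ) : MeasurableSet (B s) := by
  have : B s = Icc ((-1:ℝ),(-1:ℝ)) (1,1) ∩ {p : ℝ×ℝ | |p.1^2 - p.2^2| ≤ s} := rfl
  rw [this]
  exact measurableSet_Icc.inter (measurableSet_le (by fun_prop) measurable_const)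

lemma slice_subset (x s : ℝ) :
    {y : ℝ | ((x, y) : ℝ × ℝ) ∈ B s} ⊆
      Icc (-(Real.sqrt (x^2+s))) (-(Real.sqrt (max 0 (x^2-s)))) ∪
      Icc (Real.sqrt (max 0 (x^2-s))) (Real.sqrt (x^2+s)) := by
  intro y hy
  obtain ⟨hsq, habs⟩ := hy
  rw [abs_le] at habs
  have h1 : y^2 ≤ x^2 + s := by simp only at habs; linarith [habs.1]
  have h2 : max 0 (x^2 - s) ≤ y^2 := by
    rcases max_cases 0 (x^2-s) with ⟨h,_⟩|⟨h,_⟩ <;> rw [h]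
    · positivity
    · simp only at habs; linarith [habs.2]
  have hy1 : |y| ≤ Real.sqrt (x^2+s) := by
    rw [← Real.sqrt_sq_eq_abs]; exact Real.sqrt_le_sqrt h1
  have hy2 : Real.sqrt (max 0 (x^2-s)) ≤ |y| := by
    rw [← Real.sqrt_sq_eq_abs]; exact Real.sqrt_le_sqrt h2
  rcases le_total 0 y with h|h
  · right
    rw [abs_of_nonneg h] at hy1 hy2
    exact ⟨hy2, hy1⟩
  · left
    rw [abs_of_nonpos h] at hy1 hy2
    constructor <;> linarith

lemma slice_vol (x s : ℝ) (hs : 0 ≤ s) :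
    volume {y : ℝ | ((x, y) : ℝ × ℝ) ∈ B s} ≤
      ENNReal.ofReal (2 * (Real.sqrt (x^2+s) - Real.sqrt (max 0 (x^2-s)))) := by
  have hd : 0 ≤ Real.sqrt (x^2+s) - Real.sqrt (max 0 (x^2-s)) := by
    have := Real.sqrt_le_sqrt (show max 0 (x^2-s) ≤ x^2+s from
      max_le (by positivity) (by linarith))
    linarith
  calc volume {y : ℝ | ((x, y) : ℝ × ℝ) ∈ B s}
      ≤ volume (Icc (-(Real.sqrt (x^2+s))) (-(Real.sqrt (max 0 (x^2-s)))) ∪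
        Icc (Real.sqrt (max 0 (x^2-s))) (Real.sqrt (x^2+s))) :=
        measure_mono (slice_subset x s)
    _ ≤ volume (Icc (-(Real.sqrt (x^2+s))) (-(Real.sqrt (max 0 (x^2-s))))) +
        volume (Icc (Real.sqrt (max 0 (x^2-s))) (Real.sqrt (x^2+s))) := measure_union_le _ _
    _ ≤ ENNReal.ofReal (2 * (Real.sqrt (x^2+s) - Real.sqrt (max 0 (x^2-s)))) := by
        rw [Real.volume_Icc, Real.volume_Icc, ← ENNReal.ofReal_add (by linarith) (by linarith)]
        apply ENNReal.ofReal_le_ofReal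
        ring_nf
        linarith

lemma slice_far (x s : ℝ) (hs : 0 < s) (hx : s ≤ x^2) :
    volume {y : ℝ | ((x,y):ℝ×ℝ) ∈ B s} ≤ ENNReal.ofReal (4*s/|x|) := by
  refine (slice_vol x s hs.le).trans (ENNReal.ofReal_le_ofReal ?_)
  have hmax : max 0 (x^2 - s) = x^2 - s := max_eq_right (by linarith)
  rw [hmax]
  have hxne : x ≠ 0 := by intro h; rw [h] at hx; nlinarith
  have hxpos : 0 < |x| := abs_pos.mpr hxne
  set u := Real.sqrt (x^2+s) with hu
  set r := Real.sqrt (x^2-s) with hr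
  have hu2 : u^2 = x^2+s := Real.sq_sqrt (by positivity)
  have hr2 : r^2 = x^2-s := Real.sq_sqrt (by linarith)
  have hrnn : 0 ≤ r := Real.sqrt_nonneg _
  have hru : r ≤ u := Real.sqrt_le_sqrt (by linarith)
  have hur : |x| ≤ u + r := by
    have h : |x| ≤ u := by
      rw [← Real.sqrt_sq_eq_abs]; exact Real.sqrt_le_sqrt (by linarith)
    linarith
  rw [le_div_iff₀ hxpos]
  nlinarith [sq_nonneg (u - r)]

lemma slice_near (x s : ℝ) (hs : 0 < s) :
    volume {y : ℝ | ((x,y):ℝ×ℝ) ∈ B s} ≤ ENNReal.ofReal (2 * Real.sqrt (x^2+s)) := by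
  refine (slice_vol x s hs.le).trans (ENNReal.ofReal_le_ofReal ?_)
  have h0 : 0 ≤ Real.sqrt (max 0 (x^2-s)) := Real.sqrt_nonneg _
  nlinarith

lemma far1 (s t : ℝ) (hs : 0 ≤ s) (ht : 0 < t) (ht1 : t ≤ 1) :
    ∫⁻ x in Icc t 1, ENNReal.ofReal (4*s/|x|) ≤ ENNReal.ofReal (4*s*Real.log (1/t)) := by
  have hcont : ContinuousOn (fun x : ℝ => 4*s/|x|) (Icc t 1) :=
    ContinuousOn.div continuousOn_const continuous_abs.continuousOn
      (fun x hx => by have h1 := hx.1; have : (0:ℝ) < |x| := abs_pos.mpr (by linarith); linarith)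
  have hint : IntegrableOn (fun x : ℝ => 4*s/|x|) (Icc t 1) := hcont.integrableOn_Icc
  rw [← ofReal_integral_eq_lintegral_ofReal hint
    (Filter.Eventually.of_forall (fun x => by positivity))]
  apply ENNReal.ofReal_le_ofReal
  have h1 : ∫ x in Icc t 1, 4*s/|x| = ∫ x in Icc t 1, 4*s/x :=
    setIntegral_congr_fun measurableSet_Icc
      (fun x hx => by rw [abs_of_pos (lt_of_lt_of_le ht hx.1)])
  have h0 : (0:ℝ) ∉ Set.uIcc t 1 := by
    rw [Set.uIcc_of_le ht1]
    intro h
    exact absurd h.1 (not_le.mpr ht)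
  have h2 : ∫ x in t..1, 4*s/x = 4*s*Real.log (1/t) := by
    simp_rw [div_eq_mul_one_div (4*s)]
    rw [intervalIntegral.integral_const_mul, integral_one_div h0]
  rw [h1, integral_Icc_eq_integral_Ioc, ← intervalIntegral.integral_of_le ht1, h2]

lemma far2 (s t : ℝ) (hs : 0 ≤ s) (ht : 0 < t) (ht1 : t ≤ 1) :
    ∫⁻ x in Icc (-1 : ℝ) (-t), ENNReal.ofReal (4*s/|x|) ≤
      ENNReal.ofReal (4*s*Real.log (1/t)) := by
  have hcont : ContinuousOn (fun x : ℝ => 4*s/|x|) (Icc (-1:ℝ) (-t)) :=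
    ContinuousOn.div continuousOn_const continuous_abs.continuousOn
      (fun x hx => by
        have h2 := hx.2
        have : x < 0 := lt_of_le_of_lt h2 (by linarith)
        simp [abs_ne_zero]
        linarith)
  have hint : IntegrableOn (fun x : ℝ => 4*s/|x|) (Icc (-1:ℝ) (-t)) := hcont.integrableOn_Icc
  rw [← ofReal_integral_eq_lintegral_ofReal hint
    (Filter.Eventually.of_forall (fun x => by positivity))]
  apply ENNReal.ofReal_le_ofReal
  have h1 : ∫ x in Icc (-1:ℝ) (-t), 4*s/|x| = ∫ x in Icc (-1:ℝ) (-t), (-(4*s))/x := by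
    apply setIntegral_congr_fun measurableSet_Icc
    intro x hx
    have hx0 : x < 0 := lt_of_le_of_lt hx.2 (by linarith)
    simp only
    rw [abs_of_neg hx0, div_neg, neg_div]
  have h0 : (0:ℝ) ∉ Set.uIcc (-1:ℝ) (-t) := by
    rw [Set.uIcc_of_le (by linarith)]
    intro h
    have := h.2
    linarith
  have h2 : ∫ x in (-1:ℝ)..(-t), (-(4*s))/x = 4*s*Real.log (1/t) := by
    simp_rw [div_eq_mul_one_div (-(4*s))]
    rw [intervalIntegral.integral_const_mul, integral_one_div h0]
    rw [show (-t)/(-1:ℝ) = t by field_simp]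
    rw [one_div, Real.log_inv]
    ring
  rw [h1, integral_Icc_eq_integral_Ioc, ← intervalIntegral.integral_of_le (by linarith), h2]


lemma measB_le (s : ℝ) (hs : 0 < s) :
    volume (B s) ≤ ENNReal.ofReal (12*s + 4*s*max 0 (Real.log s⁻¹)) := by
  have hmax : 0 ≤ max 0 (Real.log s⁻¹) := le_max_left _ _
  rcases le_or_gt (1/2 : ℝ) s with hhalf|hhalf
  · calc volume (B s) ≤ volume (Icc ((-1:ℝ),(-1:ℝ)) (1,1)) := measure_mono (fun p hp => hp.1)
      _ = ENNReal.ofReal 4 := by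
          rw [Icc_prod_eq, Measure.volume_eq_prod, Measure.prod_prod]
          simp only [Real.volume_Icc]
          norm_num
      _ ≤ _ := by
          apply ENNReal.ofReal_le_ofReal
          nlinarith
  · set t := Real.sqrt (2*s) with htdef
    have ht : 0 < t := Real.sqrt_pos.mpr (by linarith)
    have ht2 : t^2 = 2*s := Real.sq_sqrt (by linarith)
    have ht1 : t ≤ 1 := by
      rw [show (1:ℝ) = Real.sqrt 1 by rw [Real.sqrt_one]]
      exact Real.sqrt_le_sqrt (by linarith)
    have hlog : 0 ≤ Real.log (1/t) := Real.log_nonneg ((le_div_iff₀ ht).mpr (by linarith))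
    have hprod : volume (B s) = ∫⁻ x, volume (Prod.mk x ⁻¹' B s) := by
      rw [Measure.volume_eq_prod, Measure.prod_apply (measB s)]
    rw [hprod, ← lintegral_add_compl _ (measurableSet_Ioo (a := -t) (b := t))]
    have hnear : ∫⁻ x in Ioo (-t) t, volume (Prod.mk x ⁻¹' B s) ≤ ENNReal.ofReal (12*s) := by
      have hpt : ∀ x ∈ Ioo (-t) t, volume (Prod.mk x ⁻¹' B s) ≤
          ENNReal.ofReal (4*Real.sqrt s) := by
        intro x hx
        refine (slice_near x s hs).trans (ENNReal.ofReal_le_ofReal ?_)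
        have hx2 : x^2 < 2*s := by
          have h1 := hx.1; have h2 := hx.2
          nlinarith
        have : Real.sqrt (x^2+s) ≤ Real.sqrt (4*s) := Real.sqrt_le_sqrt (by linarith)
        have h4 : Real.sqrt (4*s) = 2*Real.sqrt s := by
          rw [show (4:ℝ)*s = 2^2*s by norm_num, Real.sqrt_mul (by positivity),
            Real.sqrt_sq (by norm_num)]
        linarith
      calc ∫⁻ x in Ioo (-t) t, volume (Prod.mk x ⁻¹' B s)
          ≤ ∫⁻ _ in Ioo (-t) t, ENNReal.ofReal (4*Real.sqrt s) :=
            setLIntegral_mono' measurableSet_Ioo hpt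
        _ = ENNReal.ofReal (4*Real.sqrt s) * volume (Ioo (-t) t) := setLIntegral_const _ _
        _ = ENNReal.ofReal (4*Real.sqrt s) * ENNReal.ofReal (2*t) := by
            rw [Real.volume_Ioo]; norm_num; ring_nf
            rw [ENNReal.ofReal_mul ht.le, ENNReal.ofReal_ofNat]; ring
        _ = ENNReal.ofReal (4*Real.sqrt s*(2*t)) := by
            rw [← ENNReal.ofReal_mul (by positivity)]
        _ ≤ ENNReal.ofReal (12*s) := by
            apply ENNReal.ofReal_le_ofReal
            have ha : (Real.sqrt s)^2 = s := Real.sq_sqrt hs.le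
            have hb : 0 ≤ Real.sqrt s := Real.sqrt_nonneg _
            nlinarith [sq_nonneg (2*Real.sqrt s - t)]
    have hfar : ∫⁻ x in (Ioo (-t) t)ᶜ, volume (Prod.mk x ⁻¹' B s) ≤
        ENNReal.ofReal (8*s*Real.log (1/t)) := by
      set E : Set ℝ := Icc (-1:ℝ) (-t) ∪ Icc t 1 with hE
      have hEmeas : MeasurableSet E := measurableSet_Icc.union measurableSet_Icc
      have hpt : ∀ x ∈ (Ioo (-t) t)ᶜ, volume (Prod.mk x ⁻¹' B s) ≤
          E.indicator (fun x => ENNReal.ofReal (4*s/|x|)) x := by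
        intro x hx
        simp only [mem_compl_iff, mem_Ioo, not_and_or, not_lt] at hx
        by_cases hxE : x ∈ E
        · rw [indicator_of_mem hxE]
          apply slice_far x s hs
          have : t ≤ |x| := by
            rcases hx with h|h
            · rw [abs_of_nonpos (by linarith)]; linarith
            · rw [abs_of_nonneg (by linarith)]; linarith
          nlinarith [sq_abs x]
        · rw [indicator_of_notMem hxE]
          have hempty : Prod.mk x ⁻¹' B s = ∅ := by
            rw [eq_empty_iff_forall_notMem]
            intro y hy
            have hx1 : x ∈ Icc (-1:ℝ) 1 := ((mem_sq_iff _).mp hy.1).1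
            apply hxE
            rcases hx with h|h
            · exact Or.inl ⟨hx1.1, by linarith⟩
            · exact Or.inr ⟨by linarith, hx1.2⟩
          rw [hempty]
          simp
      calc ∫⁻ x in (Ioo (-t) t)ᶜ, volume (Prod.mk x ⁻¹' B s)
          ≤ ∫⁻ x in (Ioo (-t) t)ᶜ, E.indicator (fun x => ENNReal.ofReal (4*s/|x|)) x :=
            setLIntegral_mono' measurableSet_Ioo.compl hpt
        _ ≤ ∫⁻ x, E.indicator (fun x => ENNReal.ofReal (4*s/|x|)) x :=
            setLIntegral_le_lintegral _ _
        _ = ∫⁻ x in E, ENNReal.ofReal (4*s/|x|) := lintegral_indicator hEmeas _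
        _ = (∫⁻ x in Icc (-1:ℝ) (-t), ENNReal.ofReal (4*s/|x|)) +
            ∫⁻ x in Icc t 1, ENNReal.ofReal (4*s/|x|) := by
            rw [hE, lintegral_union measurableSet_Icc]
            rw [Set.disjoint_left]
            intro x h1 h2
            have := h1.2; have := h2.1
            linarith
        _ ≤ ENNReal.ofReal (4*s*Real.log (1/t)) + ENNReal.ofReal (4*s*Real.log (1/t)) :=
            add_le_add (far2 s t hs.le ht ht1) (far1 s t hs.le ht ht1)
        _ = ENNReal.ofReal (8*s*Real.log (1/t)) := by
            rw [← ENNReal.ofReal_add (by positivity) (by positivity)]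
            ring_nf
    calc (∫⁻ x in Ioo (-t) t, volume (Prod.mk x ⁻¹' B s)) +
        ∫⁻ x in (Ioo (-t) t)ᶜ, volume (Prod.mk x ⁻¹' B s)
        ≤ ENNReal.ofReal (12*s) + ENNReal.ofReal (8*s*Real.log (1/t)) := add_le_add hnear hfar
      _ = ENNReal.ofReal (12*s + 8*s*Real.log (1/t)) := by
          rw [← ENNReal.ofReal_add (by positivity) (by positivity)]
      _ ≤ _ := by
          apply ENNReal.ofReal_le_ofReal
          have h1 : Real.log (1/t) = -(Real.log (2*s))/2 := by
            rw [one_div, Real.log_inv, htdef, Real.log_sqrt (by linarith)]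
            ring
          have h2 : Real.log s ≤ Real.log (2*s) := Real.log_le_log hs (by linarith)
          have e1 : 8*s*Real.log (1/t) = 4*s*(-Real.log (2*s)) := by rw [h1]; ring
          have e2 : 4*s*(-Real.log (2*s)) ≤ 4*s*(-Real.log s) := by nlinarith
          have e3 : 4*s*(-Real.log s) ≤ 4*s*(max 0 (Real.log s⁻¹)) := by
            rw [Real.log_inv]
            nlinarith [le_max_right (0:ℝ) (-Real.log s)]
          linarith


lemma covering (L : ℝ) (hL : 2 ≤ L) (p : ℝ × ℝ)
    (hp : p ∈ Icc ((-1:ℝ),(-1:ℝ)) (1,1)) (h1 : 1 ≤ L * |p.1^2 - p.2^2|) :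
    ∃ k ≤ Nat.ceil (Real.logb 2 L),
      (2:ℝ)^k ≤ L * |p.1^2-p.2^2| ∧ L * |p.1^2-p.2^2| < 2^(k+1) := by
  set t := L * |p.1^2-p.2^2| with htd
  have ht0 : 0 < t := by linarith
  have hqle : |p.1^2 - p.2^2| ≤ 1 := by
    obtain ⟨hx, hy⟩ := (mem_sq_iff p).mp hp
    have hx1 := hx.1; have hx2 := hx.2; have hy1 := hy.1; have hy2 := hy.2
    rw [abs_le]
    constructor <;> nlinarith
  have htL : t ≤ L := by
    calc t = L * |p.1^2-p.2^2| := rfl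
    _ ≤ L * 1 := by nlinarith
    _ = L := mul_one L
  refine ⟨Nat.floor (Real.logb 2 t), ?_, ?_, ?_⟩
  · exact le_trans (Nat.floor_mono (Real.logb_le_logb_of_le one_lt_two ht0 htL))
      (Nat.floor_le_ceil _)
  · have hfl : (Nat.floor (Real.logb 2 t) : ℝ) ≤ Real.logb 2 t :=
      Nat.floor_le (Real.logb_nonneg one_lt_two h1)
    have h2 : (2:ℝ) ^ ((Nat.floor (Real.logb 2 t) : ℝ)) ≤ (2:ℝ) ^ (Real.logb 2 t) :=
      (Real.rpow_le_rpow_left_iff one_lt_two).mpr hfl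
    rw [Real.rpow_logb (by norm_num) (by norm_num) ht0] at h2
    calc (2:ℝ)^(Nat.floor (Real.logb 2 t)) = (2:ℝ) ^ ((Nat.floor (Real.logb 2 t) : ℝ)) :=
        (Real.rpow_natCast 2 _).symm
    _ ≤ t := h2
  · have hfl : Real.logb 2 t < (Nat.floor (Real.logb 2 t) : ℝ) + 1 :=
      Nat.lt_floor_add_one _
    have h2 : (2:ℝ) ^ (Real.logb 2 t) < (2:ℝ) ^ (((Nat.floor (Real.logb 2 t) : ℝ)) + 1) :=
      (Real.rpow_lt_rpow_left_iff one_lt_two).mpr hfl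
    rw [Real.rpow_logb (by norm_num) (by norm_num) ht0] at h2
    calc t < (2:ℝ) ^ (((Nat.floor (Real.logb 2 t) : ℝ)) + 1) := h2
    _ = (2:ℝ)^(Nat.floor (Real.logb 2 t) + 1) := by
        rw [← Real.rpow_natCast 2 (Nat.floor (Real.logb 2 t) + 1)]
        push_cast
        ring_nf


lemma measurable_q : Measurable (fun p : ℝ × ℝ => L * |p.1^2 - p.2^2|) := by fun_prop

lemma key (L : ℝ) (hL : 2 ≤ L) :
    ∫⁻ p in {p : ℝ×ℝ | p ∈ Icc ((-1:ℝ),(-1:ℝ)) ((1:ℝ),(1:ℝ)) ∧ 1 ≤ L*|p.1^2-p.2^2|},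
      ENNReal.ofReal (1/(1+L*|p.1^2-p.2^2|)) ≤
      ENNReal.ofReal (220*(Real.log L)^2/L) := by
  have hL0 : (0:ℝ) < L := by linarith
  have hlog2 : (0.6931471803:ℝ) < Real.log 2 := Real.log_two_gt_d9
  have hlgL : Real.log 2 ≤ Real.log L := Real.log_le_log (by norm_num) hL
  set N := Nat.ceil (Real.logb 2 L) with hN
  set S : Set (ℝ×ℝ) := {p : ℝ×ℝ | p ∈ Icc ((-1:ℝ),(-1:ℝ)) ((1:ℝ),(1:ℝ)) ∧ 1 ≤ L*|p.1^2-p.2^2|}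
    with hSdef
  have hSmeas : MeasurableSet S := by
    have : S = Icc ((-1:ℝ),(-1:ℝ)) (1,1) ∩ {p : ℝ×ℝ | 1 ≤ L*|p.1^2-p.2^2|} := rfl
    rw [this]
    exact measurableSet_Icc.inter (measurableSet_le measurable_const (by fun_prop))
  set Ck : ℕ → Set (ℝ×ℝ) := fun k =>
    {p : ℝ×ℝ | p ∈ Icc ((-1:ℝ),(-1:ℝ)) ((1,1)) ∧ (2:ℝ)^k ≤ L*|p.1^2-p.2^2| ∧
      L*|p.1^2-p.2^2| < 2^(k+1)} with hCk
  have hCmeas : ∀ k, MeasurableSet (Ck k) := by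
    intro k
    have : Ck k = Icc ((-1:ℝ),(-1:ℝ)) (1,1) ∩
        ({p : ℝ×ℝ | (2:ℝ)^k ≤ L*|p.1^2-p.2^2|} ∩ {p : ℝ×ℝ | L*|p.1^2-p.2^2| < 2^(k+1)}) := by
      ext p; simp [hCk, and_assoc]
    rw [this]
    exact measurableSet_Icc.inter
      ((measurableSet_le measurable_const (by fun_prop)).inter
        (measurableSet_lt (by fun_prop) measurable_const))
  have hpt : ∀ p ∈ S, ENNReal.ofReal (1/(1+L*|p.1^2-p.2^2|)) ≤
      ∑ k ∈ Finset.range (N+1),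
        (Ck k).indicator (fun _ => ENNReal.ofReal (((2:ℝ)^k)⁻¹)) p := by
    intro p hp
    obtain ⟨k, hkN, hk1, hk2⟩ := covering L hL p hp.1 hp.2
    have hmem : p ∈ Ck k := ⟨hp.1, hk1, hk2⟩
    have hterm : ENNReal.ofReal (1/(1+L*|p.1^2-p.2^2|)) ≤
        (Ck k).indicator (fun _ => ENNReal.ofReal (((2:ℝ)^k)⁻¹)) p := by
      rw [indicator_of_mem hmem]
      apply ENNReal.ofReal_le_ofReal
      rw [← one_div]
      apply one_div_le_one_div_of_le (by positivity)
      have := abs_nonneg (p.1^2-p.2^2)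
      nlinarith
    refine hterm.trans (Finset.single_le_sum (f := fun k =>
      (Ck k).indicator (fun _ => ENNReal.ofReal (((2:ℝ)^k)⁻¹)) p)
      (fun i _ => zero_le) (Finset.mem_range.mpr (Nat.lt_succ_of_le hkN)))
  calc ∫⁻ p in S, ENNReal.ofReal (1/(1+L*|p.1^2-p.2^2|))
      ≤ ∫⁻ p in S, ∑ k ∈ Finset.range (N+1),
          (Ck k).indicator (fun _ => ENNReal.ofReal (((2:ℝ)^k)⁻¹)) p :=
        setLIntegral_mono' hSmeas hpt
    _ ≤ ∫⁻ p, ∑ k ∈ Finset.range (N+1),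
          (Ck k).indicator (fun _ => ENNReal.ofReal (((2:ℝ)^k)⁻¹)) p :=
        setLIntegral_le_lintegral _ _
    _ = ∑ k ∈ Finset.range (N+1), ∫⁻ p,
          (Ck k).indicator (fun _ => ENNReal.ofReal (((2:ℝ)^k)⁻¹)) p :=
        lintegral_finset_sum _ (fun k _ => (measurable_const.indicator (hCmeas k)))
    _ = ∑ k ∈ Finset.range (N+1), ENNReal.ofReal (((2:ℝ)^k)⁻¹) * volume (Ck k) := by
        refine Finset.sum_congr rfl (fun k _ => ?_)
        rw [lintegral_indicator (hCmeas k), setLIntegral_const]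
    _ ≤ ∑ k ∈ Finset.range (N+1), ENNReal.ofReal ((24 + 8*Real.log L)/L) := by
        refine Finset.sum_le_sum (fun k _ => ?_)
        have hsk : (0:ℝ) < 2^(k+1)/L := by positivity
        have hsub : Ck k ⊆ B (2^(k+1)/L) := by
          intro p hp
          refine ⟨hp.1, ?_⟩
          rw [le_div_iff₀ hL0]
          nlinarith [hp.2.2]
        have hvol := (measure_mono hsub).trans (measB_le _ hsk)
        calc ENNReal.ofReal (((2:ℝ)^k)⁻¹) * volume (Ck k)
            ≤ ENNReal.ofReal (((2:ℝ)^k)⁻¹) *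
              ENNReal.ofReal (12*(2^(k+1)/L) + 4*(2^(k+1)/L)*max 0 (Real.log ((2^(k+1)/L))⁻¹)) :=
              mul_le_mul_right hvol _
          _ = ENNReal.ofReal (((2:ℝ)^k)⁻¹ *
              (12*(2^(k+1)/L) + 4*(2^(k+1)/L)*max 0 (Real.log ((2^(k+1)/L))⁻¹))) := by
              rw [← ENNReal.ofReal_mul (by positivity)]
          _ ≤ ENNReal.ofReal ((24 + 8*Real.log L)/L) := by
              apply ENNReal.ofReal_le_ofReal
              set X := max 0 (Real.log ((2^(k+1)/L))⁻¹) with hX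
              have hXlog : X ≤ Real.log L := by
                apply max_le (by linarith)
                have h1 : ((2:ℝ)^(k+1)/L)⁻¹ = L/2^(k+1) := by rw [inv_div]
                rw [h1]
                exact Real.log_le_log (by positivity)
                  (div_le_self hL0.le (one_le_pow₀ (by norm_num)))
              have heq : ((2:ℝ)^k)⁻¹ * (12*(2^(k+1)/L) + 4*(2^(k+1)/L)*X) =
                  (24 + 8*X)/L := by
                have h2k : ((2:ℝ)^k) ≠ 0 := by positivity
                field_simp
                ring
              rw [heq]
              have hX0 : 0 ≤ X := le_max_left _ _
              apply (div_le_div_iff_of_pos_right hL0).mpr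
              linarith
    _ = ((N:ℝ≥0∞)+1) * ENNReal.ofReal ((24 + 8*Real.log L)/L) := by
        rw [Finset.sum_const, Finset.card_range, nsmul_eq_mul]
        push_cast
        ring
    _ ≤ ENNReal.ofReal (220*(Real.log L)^2/L) := by
        have hcast : ((N:ℝ≥0∞)+1) = ENNReal.ofReal ((N:ℝ)+1) := by
          rw [ENNReal.ofReal_add (by positivity) (by norm_num), ENNReal.ofReal_natCast,
            ENNReal.ofReal_one]
        rw [hcast, ← ENNReal.ofReal_mul (by positivity)]
        apply ENNReal.ofReal_le_ofReal
        have hlgpos : (0:ℝ) < Real.log L := by linarith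
        have hNb : (N:ℝ) < Real.logb 2 L + 1 :=
          Nat.ceil_lt_add_one (Real.logb_nonneg one_lt_two (by linarith))
        have hNl2 : (N:ℝ) * Real.log 2 ≤ Real.log L + Real.log 2 := by
          have hpos : (0:ℝ) < Real.log 2 := by linarith
          have h := mul_le_mul_of_nonneg_right hNb.le hpos.le
          rw [Real.logb, add_mul, one_mul, div_mul_cancel₀ _ hpos.ne'] at h
          linarith
        have hN5 : (N:ℝ) + 1 ≤ 5 * Real.log L := by
          nlinarith [Nat.cast_nonneg (α := ℝ) N, mul_lt_mul_of_pos_left hlog2 hlgpos]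
        have h44 : 24 + 8*Real.log L ≤ 44*Real.log L := by nlinarith
        have hnum : ((N:ℝ)+1)*(24+8*Real.log L) ≤ 220 * (Real.log L)^2 := by
          calc ((N:ℝ)+1)*(24+8*Real.log L) ≤ (5*Real.log L)*(44*Real.log L) :=
            mul_le_mul hN5 h44 (by linarith) (by linarith)
          _ = 220 * (Real.log L)^2 := by ring
        calc ((N:ℝ)+1) * ((24+8*Real.log L)/L) = (((N:ℝ)+1) * (24+8*Real.log L))/L := by ring
        _ ≤ (220 * (Real.log L)^2)/L := (div_le_div_iff_of_pos_right hL0).mpr hnum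
        _ = 220*(Real.log L)^2/L := by ring

end Stmt15


theorem stmt_15 :
    ∃ C > 0, ∀ (a : ℝ × ℝ → ℝ) (M : ℝ), Measurable a → (∀ p, |a p| ≤ M) →
      ∀ L : ℝ, 2 ≤ L →
        ∫ p in {p : ℝ × ℝ | p ∈ Icc ((-1:ℝ), (-1:ℝ)) ((1:ℝ), (1:ℝ)) ∧
            1 ≤ L * |p.1 ^ 2 - p.2 ^ 2|},
          |a p| / (1 + L * |p.1 ^ 2 - p.2 ^ 2|)
        ≤ C * M * (Real.log L) ^ 2 / L := by
  refine ⟨220, by norm_num, ?_⟩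
  intro a M ha hM L hL
  have hL0 : (0:ℝ) < L := by linarith
  have hM0 : 0 ≤ M := (abs_nonneg _).trans (hM ((0:ℝ),(0:ℝ)))
  have hfm : Measurable (fun p : ℝ×ℝ => |a p| / (1+L*|p.1^2-p.2^2|)) := by fun_prop
  have hnn : ∀ p : ℝ×ℝ, 0 ≤ |a p| / (1+L*|p.1^2-p.2^2|) := fun p =>
    div_nonneg (abs_nonneg _) (by nlinarith [abs_nonneg (p.1^2-p.2^2)])
  rw [MeasureTheory.integral_eq_lintegral_of_nonneg_ae
    (Filter.Eventually.of_forall hnn) hfm.aestronglyMeasurable]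
  have hbound : ∫⁻ p in {p : ℝ × ℝ | p ∈ Icc ((-1:ℝ), (-1:ℝ)) ((1:ℝ), (1:ℝ)) ∧
        1 ≤ L * |p.1 ^ 2 - p.2 ^ 2|},
      ENNReal.ofReal (|a p| / (1+L*|p.1^2-p.2^2|)) ≤
      ENNReal.ofReal (M * (220*(Real.log L)^2/L)) := by
    calc ∫⁻ p in {p : ℝ × ℝ | p ∈ Icc ((-1:ℝ), (-1:ℝ)) ((1:ℝ), (1:ℝ)) ∧
          1 ≤ L * |p.1 ^ 2 - p.2 ^ 2|},
        ENNReal.ofReal (|a p| / (1+L*|p.1^2-p.2^2|))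
        ≤ ∫⁻ p in {p : ℝ × ℝ | p ∈ Icc ((-1:ℝ), (-1:ℝ)) ((1:ℝ), (1:ℝ)) ∧
            1 ≤ L * |p.1 ^ 2 - p.2 ^ 2|},
          ENNReal.ofReal M * ENNReal.ofReal (1/(1+L*|p.1^2-p.2^2|)) := by
          apply lintegral_mono
          intro p
          dsimp only
          rw [← ENNReal.ofReal_mul hM0, mul_one_div]
          apply ENNReal.ofReal_le_ofReal
          have hden : (0:ℝ) < 1+L*|p.1^2-p.2^2| := by nlinarith [abs_nonneg (p.1^2-p.2^2)]
          exact (div_le_div_iff_of_pos_right hden).mpr (hM p)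
      _ = ENNReal.ofReal M * ∫⁻ p in {p : ℝ × ℝ | p ∈ Icc ((-1:ℝ), (-1:ℝ)) ((1:ℝ), (1:ℝ)) ∧
            1 ≤ L * |p.1 ^ 2 - p.2 ^ 2|},
          ENNReal.ofReal (1/(1+L*|p.1^2-p.2^2|)) :=
          lintegral_const_mul _ (Measurable.ennreal_ofReal (by fun_prop))
      _ ≤ ENNReal.ofReal M * ENNReal.ofReal (220*(Real.log L)^2/L) :=
          mul_le_mul_right (Stmt15.key L hL) _
      _ = ENNReal.ofReal (M * (220*(Real.log L)^2/L)) := (ENNReal.ofReal_mul hM0).symm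
  have hfin := ENNReal.toReal_le_of_le_ofReal
    (mul_nonneg hM0 (by positivity)) hbound
  calc _ ≤ M * (220*(Real.log L)^2/L) := hfin
    _ = 220 * M * (Real.log L)^2 / L := by ring
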